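/- Assume W is singular (0 is an eigenvalue of W) and that for every complex eigenvalue λ of W the matrix E_λ = e^{Ah} + λ·𝓗(h) is invertible. If the networked sampled-data system (Φ_s, Ψ_s) is controllable, then the pair (e^{Ah}, 𝓑(h)) satisfies the PBH condition. -/

import Mathlib

open Matrix
open scoped Kronecker

/-- Entrywise complexification of a real matrix. -/
noncomputable def cpx {a b : Type*} (M : Matrix a b ℝ) : Matrix a b ℂ :=
  M.map (Complex.ofReal)

/-- The matrix exponential `e^{M}`. -/
noncomputable def mexp {q : Type*} [Fintype q] [DecidableEq q]
    (M : Matrix q q ℝ) : Matrix q q ℝ :=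
  NormedSpace.exp M

/-- The entrywise integral `∫₀ʰ e^{Aτ} dτ`. -/
noncomputable def intExp {q : Type*} [Fintype q] [DecidableEq q]
    (A : Matrix q q ℝ) (h : ℝ) : Matrix q q ℝ :=
  Matrix.of fun i j => ∫ τ in (0:ℝ)..h, (NormedSpace.exp (τ • A)) i j

/-- `θ` is an eigenvalue of the complex square matrix `M`. -/
def IsEig {q : Type*} [Fintype q] [DecidableEq q] (M : Matrix q q ℂ) (θ : ℂ) : Prop :=
  (θ • (1 : Matrix q q ℂ) - M).det = 0

/-- PBH condition for a pair of complex matrices: for every `s ∈ ℂ`, the only row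
vector `v` with `v (sI - M) = 0` and `v G = 0` is `v = 0`. -/
def PBH {q r : Type*} [Fintype q] [DecidableEq q] [Fintype r]
    (M : Matrix q q ℂ) (G : Matrix q r ℂ) : Prop :=
  ∀ (s : ℂ) (v : q → ℂ), v ᵥ* (s • (1 : Matrix q q ℂ) - M) = 0 → v ᵥ* G = 0 → v = 0

/-- Controllability of a discrete-time linear system `x⁺ = F x + G u`:
every state can be steered to the origin in finitely many steps. -/
def Controllable {q r : Type*} [Fintype q] [DecidableEq q] [Fintype r]
    (F : Matrix q q ℝ) (G : Matrix q r ℝ) : Prop :=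
  ∀ x : q → ℝ, ∃ (k : ℕ) (u : Fin k → r → ℝ),
    (F ^ k) *ᵥ x + ∑ j : Fin k, (F ^ (k - 1 - (j : ℕ))) *ᵥ (G *ᵥ u j) = 0

/-- `𝓑(h) = (∫₀ʰ e^{Aτ} dτ)·B`. -/
noncomputable def sampB {n p : ℕ} (A : Matrix (Fin n) (Fin n) ℝ)
    (B : Matrix (Fin n) (Fin p) ℝ) (h : ℝ) : Matrix (Fin n) (Fin p) ℝ :=
  intExp A h * B

/-- `𝓗(h) = (∫₀ʰ e^{Aτ} dτ)·H·C`. -/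
noncomputable def sampH {n m : ℕ} (A : Matrix (Fin n) (Fin n) ℝ)
    (H : Matrix (Fin n) (Fin m) ℝ) (C : Matrix (Fin m) (Fin n) ℝ) (h : ℝ) :
    Matrix (Fin n) (Fin n) ℝ :=
  intExp A h * H * C

/-- `Φ_s = I_N ⊗ e^{Ah} + W ⊗ 𝓗(h)`. -/
noncomputable def Phis {n m N : ℕ} (A : Matrix (Fin n) (Fin n) ℝ)
    (H : Matrix (Fin n) (Fin m) ℝ) (C : Matrix (Fin m) (Fin n) ℝ)
    (W : Matrix (Fin N) (Fin N) ℝ) (h : ℝ) :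
    Matrix (Fin N × Fin n) (Fin N × Fin n) ℝ :=
  (1 : Matrix (Fin N) (Fin N) ℝ) ⊗ₖ mexp (h • A) + W ⊗ₖ sampH A H C h

/-- `E_λ = e^{Ah} + λ·𝓗(h)` (complexified). -/
noncomputable def Emat {n m : ℕ} (A : Matrix (Fin n) (Fin n) ℝ)
    (H : Matrix (Fin n) (Fin m) ℝ) (C : Matrix (Fin m) (Fin n) ℝ)
    (h : ℝ) (lam : ℂ) : Matrix (Fin n) (Fin n) ℂ :=
  cpx (mexp (h • A)) + lam • cpx (sampH A H C h)


section Aux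
open Matrix
open scoped Kronecker

noncomputable def cpxv {q : Type*} (z : q → ℝ) : q → ℂ := fun i => (z i : ℂ)

lemma cpxv_mulVec {q r : Type*} [Fintype r] (M : Matrix q r ℝ) (z : r → ℝ) :
    cpxv (M *ᵥ z) = cpx M *ᵥ cpxv z := by
  funext i
  simp only [cpxv, cpx, Matrix.mulVec, dotProduct, Matrix.map_apply]
  push_cast
  rfl

lemma vecMul_smul_one {q : Type*} [Fintype q] [DecidableEq q] (s : ℂ) (v : q → ℂ) :
    v ᵥ* (s • (1 : Matrix q q ℂ)) = s • v := by
  funext i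
  simp [Matrix.vecMul, dotProduct, Matrix.one_apply, mul_comm]

lemma vecMul_kron {a b c d : Type*} [Fintype a] [Fintype b]
    (w : a → ℂ) (v : b → ℂ) (M : Matrix a c ℂ) (P : Matrix b d ℂ) :
    (fun q : a × b => w q.1 * v q.2) ᵥ* (M ⊗ₖ P) =
      fun q : c × d => (w ᵥ* M) q.1 * (v ᵥ* P) q.2 := by
  funext q
  simp only [Matrix.vecMul, dotProduct, Matrix.kroneckerMap_apply,
    Fintype.sum_prod_type]
  rw [Finset.sum_mul_sum]
  congr 1; funext i; congr 1; funext j; ring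

lemma cpx_kron {a b c d : Type*} (M : Matrix a c ℝ) (P : Matrix b d ℝ) :
    cpx (M ⊗ₖ P) = cpx M ⊗ₖ cpx P := by
  funext q r
  simp [cpx, Matrix.kroneckerMap_apply]

lemma cpx_add {a b : Type*} (M P : Matrix a b ℝ) : cpx (M + P) = cpx M + cpx P := by
  funext i j; simp [cpx]

lemma cpx_one {a : Type*} [Fintype a] [DecidableEq a] :
    cpx (1 : Matrix a a ℝ) = 1 := by
  funext i j; simp [cpx, Matrix.one_apply]; split <;> simp

lemma dot_pow {q : Type*} [Fintype q] [DecidableEq q]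
    (F : Matrix q q ℝ) (x : q → ℂ) (s : ℂ) (hx : x ᵥ* cpx F = s • x)
    (k : ℕ) (y : q → ℝ) :
    x ⬝ᵥ cpxv ((F ^ k) *ᵥ y) = s ^ k * (x ⬝ᵥ cpxv y) := by
  induction k generalizing y with
  | zero => simp
  | succ k ih =>
    rw [pow_succ, ← Matrix.mulVec_mulVec, ih (F *ᵥ y), cpxv_mulVec,
      Matrix.dotProduct_mulVec, hx, smul_dotProduct, pow_succ]
    ring_nf

lemma dot_sum {q ι : Type*} [Fintype q] (s : Finset ι) (x : q → ℂ) (f : ι → q → ℂ) :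
    x ⬝ᵥ (∑ j ∈ s, f j) = ∑ j ∈ s, x ⬝ᵥ f j := by
  simp only [dotProduct, Finset.sum_apply, Finset.mul_sum]
  rw [Finset.sum_comm]

end Aux

theorem stmt7
    (n m p N : ℕ) (hn : 0 < n) (hm : 0 < m) (hp : 0 < p) (hN : 0 < N)
    (h : ℝ) (hh : 0 < h)
    (A : Matrix (Fin n) (Fin n) ℝ) (B : Matrix (Fin n) (Fin p) ℝ)
    (C : Matrix (Fin m) (Fin n) ℝ) (H : Matrix (Fin n) (Fin m) ℝ)
    (W : Matrix (Fin N) (Fin N) ℝ)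
    (δ : Fin N → ℝ) (hδ : ∀ i, δ i = 0 ∨ δ i = 1)
    (hsing : IsEig (cpx W) 0)
    (hE : ∀ lam : ℂ, IsEig (cpx W) lam → IsUnit (Emat A H C h lam))
    (hc : Controllable (Phis A H C W h) (Matrix.diagonal δ ⊗ₖ sampB A B h)) :
    PBH (cpx (mexp (h • A))) (cpx (sampB A B h)) := by
  intro s v hv1 hv2
  -- basic rewrite: v ᵥ* cpx(mexp) = s • v
  have hMv : v ᵥ* cpx (mexp (h • A)) = s • v := by
    have h1 := hv1
    rw [Matrix.vecMul_sub, sub_eq_zero] at h1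
    rw [← h1, vecMul_smul_one]
  have hEunit : IsUnit (cpx (mexp (h • A))) := by
    have := hE 0 hsing
    simpa [Emat] using this
  by_cases hs : s = 0
  · -- s = 0 : v ᵥ* M = 0 with M invertible forces v = 0
    subst hs
    have hM0 : v ᵥ* cpx (mexp (h • A)) = 0 := by rw [hMv]; simp
    have hdet : IsUnit (cpx (mexp (h • A))).det :=
      (Matrix.isUnit_iff_isUnit_det _).mp hEunit
    have := congrArg (fun z => z ᵥ* (cpx (mexp (h • A)))⁻¹) hM0
    simpa [Matrix.vecMul_vecMul, Matrix.mul_nonsing_inv _ hdet] using this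
  · -- s ≠ 0
    have hdetW : (cpx W).det = 0 := by
      have h0 := hsing
      unfold IsEig at h0
      rw [zero_smul, zero_sub, Matrix.det_neg] at h0
      rcases mul_eq_zero.mp h0 with h' | h'
      · exact absurd h' (pow_ne_zero _ (by norm_num))
      · exact h'
    obtain ⟨w, hw0, hw⟩ := Matrix.exists_vecMul_eq_zero_iff.mpr hdetW
    set x : Fin N × Fin n → ℂ := fun q => w q.1 * v q.2 with hxdef
    have hxF : x ᵥ* cpx (Phis A H C W h) = s • x := by
      unfold Phis
      rw [cpx_add, Matrix.vecMul_add, cpx_kron, cpx_kron, cpx_one, hxdef,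
        vecMul_kron, vecMul_kron]
      funext q
      simp only [Pi.add_apply, Matrix.vecMul_one, hw, hMv, Pi.zero_apply,
        Pi.smul_apply, smul_eq_mul, zero_mul, add_zero]
      ring
    have hxG : x ᵥ* cpx (Matrix.diagonal δ ⊗ₖ sampB A B h) = 0 := by
      rw [cpx_kron, hxdef, vecMul_kron]
      funext q
      simp [hv2]
    have key : ∀ y : Fin N × Fin n → ℝ, x ⬝ᵥ cpxv y = 0 := by
      intro y
      obtain ⟨k, u, hu⟩ := hc y
      have h2 := congrArg (fun z => x ⬝ᵥ cpxv z) hu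
      have hze : cpxv (0 : Fin N × Fin n → ℝ) = 0 := by funext i; simp [cpxv]
      have hadd : cpxv ((Phis A H C W h ^ k) *ᵥ y +
          ∑ j : Fin k, (Phis A H C W h ^ (k - 1 - (j : ℕ))) *ᵥ
            ((Matrix.diagonal δ ⊗ₖ sampB A B h) *ᵥ u j)) =
          cpxv ((Phis A H C W h ^ k) *ᵥ y) +
          ∑ j : Fin k, cpxv ((Phis A H C W h ^ (k - 1 - (j : ℕ))) *ᵥ
            ((Matrix.diagonal δ ⊗ₖ sampB A B h) *ᵥ u j)) := by
        funext i; simp [cpxv]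
      rw [hadd, hze, dotProduct_add, dot_sum] at h2
      have hzero : ∀ j : Fin k, x ⬝ᵥ cpxv ((Phis A H C W h ^ (k - 1 - (j : ℕ))) *ᵥ
          ((Matrix.diagonal δ ⊗ₖ sampB A B h) *ᵥ u j)) = 0 := by
        intro j
        rw [dot_pow _ _ _ hxF, cpxv_mulVec, Matrix.dotProduct_mulVec, hxG]
        simp
      rw [dot_pow _ _ _ hxF, Finset.sum_congr rfl (fun j _ => hzero j)] at h2
      simp only [Finset.sum_const_zero, add_zero, dotProduct_zero] at h2
      exact (mul_eq_zero.mp h2).resolve_left (pow_ne_zero k hs)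
    obtain ⟨i0, hi0⟩ := Function.ne_iff.mp hw0
    funext j
    have := key (Pi.single (i0, j) 1)
    have hsingle : x ⬝ᵥ cpxv (Pi.single (i0, j) 1) = w i0 * v j := by
      simp only [dotProduct, cpxv]
      rw [Finset.sum_eq_single (i0, j)]
      · simp [hxdef]
      · intro b _ hb; simp [Pi.single_apply, hb]
      · intro hmem; simp at hmem
    rw [hsingle] at this
    have hwi : w i0 ≠ 0 := by simpa using hi0
    exact (mul_eq_zero.mp this).resolve_left hwi
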